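/- Let F be a field and 1 ≤ r < n. The block upper triangular ring R_r = {[[A, B],[0, C]] : A ∈ M_r(F), B ∈ M_{r×(n−r)}(F), C ∈ M_{n−r}(F)} with r ≥ 2 (or n − r ≥ 2) is not inner McCoy. -/

import Mathlib

open Polynomial Matrix

lemma lift_poly' {T : Type*} [Ring T] (S : Subring T) (P : T[X])
    (h : ∀ k, P.coeff k ∈ S) : ∃ f : S[X], f.map S.subtype = P := by
  refine ⟨∑ k ∈ Finset.range (P.natDegree + 1), monomial k (⟨P.coeff k, h k⟩ : S), ?_⟩
  rw [Polynomial.map_sum]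
  simp only [Polynomial.map_monomial, Subring.coe_subtype]
  exact (P.as_sum_range' _ (Nat.lt_succ_self _)).symm

section Main

variable (F : Type*) [Field F] (n r p : ℕ)

/-- the witness matrix over `F[X]` -/
noncomputable def MxM : Matrix (Fin n) (Fin n) F[X] :=
  Matrix.of fun i j => if (j : ℕ) < r ∧ r ≤ (i : ℕ) then 0 else X ^ ((i : ℕ) * n + (j : ℕ))

noncomputable def GxM : Matrix (Fin n) (Fin n) F[X] :=
  Matrix.of fun i j =>
    if (i : ℕ) = p ∧ (j : ℕ) = p then X
    else if (i : ℕ) = p + 1 ∧ (j : ℕ) = p then -1 else 0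

lemma MxM_mul_GxM (hkey : p + 1 < r ∨ r ≤ p) (hp1 : p + 1 < n) :
    MxM F n r * GxM F n p = 0 := by
  set P : Fin n := ⟨p, by omega⟩ with hP
  set Q : Fin n := ⟨p + 1, hp1⟩ with hQ
  have hPQ : P ≠ Q := by simp [hP, hQ, Fin.ext_iff]
  have hMxK : ∀ i : Fin n, MxM F n r i P * X = MxM F n r i Q := by
    intro i
    simp only [MxM, Matrix.of_apply, hP, hQ]
    split_ifs with h1 h2 h2
    · simp
    · omega
    · omega
    · rw [← pow_succ, Nat.add_assoc]
  refine Matrix.ext fun i l => ?_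
  rw [Matrix.mul_apply, Matrix.zero_apply]
  by_cases hl : (l : ℕ) = p
  · have : ∀ j : Fin n, MxM F n r i j * GxM F n p j l =
        (if j = P then MxM F n r i P * X else 0) +
        (if j = Q then -(MxM F n r i Q) else 0) := by
      intro j
      simp only [GxM, Matrix.of_apply, hl, and_true]
      by_cases hj1 : j = P
      · subst hj1
        simp [hP, hQ, hPQ]
      · by_cases hj2 : j = Q
        · subst hj2
          have : ¬ ((Q : ℕ) = p) := by simp [hQ]
          simp [hQ, hP, hj1, this, Ne.symm hPQ]
        · have h1 : ¬ ((j : ℕ) = p) := by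
            intro h; apply hj1; simp [hP, Fin.ext_iff, h]
          have h2 : ¬ ((j : ℕ) = p + 1) := by
            intro h; apply hj2; simp [hQ, Fin.ext_iff, h]
          simp [h1, h2, hj1, hj2]
    rw [Finset.sum_congr rfl fun j _ => this j, Finset.sum_add_distrib,
      Finset.sum_ite_eq' _ P, Finset.sum_ite_eq' _ Q]
    simp [hMxK i]
  · apply Finset.sum_eq_zero
    intro j _
    have : GxM F n p j l = 0 := by
      simp only [GxM, Matrix.of_apply]
      split_ifs with h1 h2 <;> first | (exfalso; omega) | rfl
    rw [this, mul_zero]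

lemma exp_inj {n j j0 k k0 : ℕ} (hj : j < n) (hj0 : j0 < n)
    (h : j + k * n = j0 + k0 * n) : j = j0 ∧ k = k0 := by
  have hn : 0 < n := by omega
  have h1 : (j + k * n) % n = j := by
    rw [Nat.add_mul_mod_self_right, Nat.mod_eq_of_lt hj]
  have h2 : (j0 + k0 * n) % n = j0 := by
    rw [Nat.add_mul_mod_self_right, Nat.mod_eq_of_lt hj0]
  have hjj : j = j0 := by rw [← h1, ← h2, h]
  subst hjj
  have hkk : k * n = k0 * n := by omega
  exact ⟨rfl, Nat.eq_of_mul_eq_mul_right hn hkk⟩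

lemma MxM_annihilator (h1 : 1 ≤ r) (h2 : r < n) (a : Matrix (Fin n) (Fin n) F)
    (hprod : MxM F n r * a.map C * MxM F n r = 0) : a = 0 := by
  have hn : 0 < n := by omega
  set i0 : Fin n := ⟨0, hn⟩ with hi0
  set il : Fin n := ⟨n - 1, by omega⟩ with hil
  have hMrow : ∀ j : Fin n, MxM F n r i0 j = X ^ (j : ℕ) := by
    intro j
    simp only [MxM, Matrix.of_apply, hi0]
    rw [if_neg (by omega)]
    norm_num
  have hMcol : ∀ k : Fin n, MxM F n r k il = X ^ ((k : ℕ) * n + (n - 1)) := by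
    intro k
    simp only [MxM, Matrix.of_apply, hil]
    rw [if_neg (by omega)]
  ext j0 k0
  have h0 : (MxM F n r * a.map C * MxM F n r) i0 il = 0 := by rw [hprod]; rfl
  rw [Matrix.mul_apply] at h0
  simp only [Matrix.mul_apply, hMrow, hMcol, Matrix.map_apply, Finset.sum_mul] at h0
  have hterm : ∀ (k j : Fin n), X ^ (j : ℕ) * C (a j k) * X ^ ((k : ℕ) * n + (n - 1)) =
      monomial ((j : ℕ) + ((k : ℕ) * n + (n - 1))) (a j k) := by
    intro k j
    rw [← C_mul_X_pow_eq_monomial, pow_add]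
    ring
  rw [Finset.sum_congr rfl fun k _ => Finset.sum_congr rfl fun j _ => hterm k j] at h0
  have h1 := congrArg (fun q : F[X] => q.coeff ((j0 : ℕ) + ((k0 : ℕ) * n + (n - 1)))) h0
  simp only [finset_sum_coeff, coeff_monomial, coeff_zero] at h1
  rw [Finset.sum_eq_single k0 (fun k _ hk => Finset.sum_eq_zero fun j _ => by
        rw [if_neg]
        intro hcond
        have heq : (j : ℕ) + (k : ℕ) * n = (j0 : ℕ) + (k0 : ℕ) * n := by omega
        exact hk (Fin.ext (exp_inj j.isLt j0.isLt heq).2))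
      (by simp)] at h1
  rw [Finset.sum_eq_single j0 (fun j _ hj => by
        rw [if_neg]
        intro hcond
        have heq : (j : ℕ) + (k0 : ℕ) * n = (j0 : ℕ) + (k0 : ℕ) * n := by omega
        exact hj (Fin.ext (exp_inj j.isLt j0.isLt heq).1))
      (by simp)] at h1
  rw [if_pos rfl] at h1
  simpa using h1

end Main


def IsInnerMcCoy (S : Type*) [Ring S] : Prop :=
  ∀ f g : Polynomial S, f ≠ 0 → g ≠ 0 → f * g * f = 0 →
    ∃ r : S, r ≠ 0 ∧ f * Polynomial.C r * f = 0

/-- The block upper triangular subring of `Mₙ(F)` with square diagonal blocks of sizes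
`r` and `n - r` (the bottom-left `(n-r) × r` block is zero). -/
def blockUT (F : Type*) [Ring F] (n r : ℕ) : Subring (Matrix (Fin n) (Fin n) F) where
  carrier := {M | ∀ i j : Fin n, (j : ℕ) < r → r ≤ (i : ℕ) → M i j = 0}
  zero_mem' := fun _ _ _ _ => rfl
  one_mem' := fun i j hj hi => Matrix.one_apply_ne (by rintro rfl; omega)
  add_mem' := by
    intro A B hA hB i j hj hi
    simp [Matrix.add_apply, hA i j hj hi, hB i j hj hi]
  neg_mem' := by
    intro A hA i j hj hi
    simp [Matrix.neg_apply, hA i j hj hi]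
  mul_mem' := by
    intro A B hA hB i j hj hi
    rw [Matrix.mul_apply]
    apply Finset.sum_eq_zero
    intro k _
    rcases lt_or_ge (k : ℕ) r with hk | hk
    · rw [hA i k hk hi, zero_mul]
    · rw [hB k j hj hk, mul_zero]

/-- For a field `F` and `1 ≤ r < n`, if one of the diagonal blocks has size at least 2,
then the block upper triangular ring `R_r` is not inner McCoy. -/
theorem blockUT_not_innerMcCoy (F : Type*) [Field F] (n r : ℕ)
    (h1 : 1 ≤ r) (h2 : r < n) (h3 : 2 ≤ r ∨ 2 ≤ n - r) :
    ¬ IsInnerMcCoy (blockUT F n r) := by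
  intro hMc
  obtain ⟨p, hkey, hp1⟩ : ∃ p : ℕ, (p + 1 < r ∨ r ≤ p) ∧ p + 1 < n := by
    rcases h3 with h | h
    · exact ⟨0, Or.inl (by omega), by omega⟩
    · exact ⟨r, Or.inr le_rfl, by omega⟩
  set S := blockUT F n r with hS
  have hMmem : ∀ k, (matPolyEquiv (MxM F n r)).coeff k ∈ S := by
    intro k i j hj hi
    rw [matPolyEquiv_coeff_apply]
    have : MxM F n r i j = 0 := by
      simp only [MxM, Matrix.of_apply]; rw [if_pos ⟨hj, hi⟩]
    rw [this, coeff_zero]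
  have hGmem : ∀ k, (matPolyEquiv (GxM F n p)).coeff k ∈ S := by
    intro k i j hj hi
    rw [matPolyEquiv_coeff_apply]
    have : GxM F n p i j = 0 := by
      simp only [GxM, Matrix.of_apply]
      split_ifs with a b <;> first | (exfalso; omega) | rfl
    rw [this, coeff_zero]
  obtain ⟨f, hf⟩ := lift_poly' S _ hMmem
  obtain ⟨g, hg⟩ := lift_poly' S _ hGmem
  have hinj : Function.Injective (Polynomial.map S.subtype) :=
    Polynomial.map_injective _ (fun a b hab => Subtype.ext hab)
  have hf0 : f ≠ 0 := by
    intro h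
    have hM0 : MxM F n r = 0 := by
      apply matPolyEquiv.injective
      rw [← hf, h, Polynomial.map_zero, map_zero]
    have h00 : MxM F n r ⟨0, by omega⟩ ⟨0, by omega⟩ = 0 := by rw [hM0]; rfl
    simp only [MxM, Matrix.of_apply] at h00
    rw [if_neg (by omega)] at h00
    simp at h00
  have hg0 : g ≠ 0 := by
    intro h
    have hG0 : GxM F n p = 0 := by
      apply matPolyEquiv.injective
      rw [← hg, h, Polynomial.map_zero, map_zero]
    have h00 : GxM F n p ⟨p, by omega⟩ ⟨p, by omega⟩ = 0 := by rw [hG0]; rfl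
    simp only [GxM, Matrix.of_apply] at h00
    rw [if_pos (by simp)] at h00
    exact Polynomial.X_ne_zero h00
  have hfgf : f * g * f = 0 := by
    apply hinj
    rw [Polynomial.map_mul, Polynomial.map_mul, hf, hg, Polynomial.map_zero,
      ← map_mul matPolyEquiv, ← map_mul matPolyEquiv, MxM_mul_GxM F n r p hkey hp1,
      zero_mul, map_zero]
  obtain ⟨a, ha0, hfa⟩ := hMc f g hf0 hg0 hfgf
  apply ha0
  have hmap : matPolyEquiv (MxM F n r * ((a : Matrix (Fin n) (Fin n) F).map C) * MxM F n r)
      = 0 := by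
    rw [_root_.map_mul, _root_.map_mul, matPolyEquiv_map_C]
    have h4 := congrArg (Polynomial.map S.subtype) hfa
    rw [Polynomial.map_mul, Polynomial.map_mul, hf, Polynomial.map_C,
      Polynomial.map_zero] at h4
    exact h4
  have hz : MxM F n r * (a : Matrix (Fin n) (Fin n) F).map C * MxM F n r = 0 :=
    matPolyEquiv.injective (by rw [hmap, map_zero])
  exact Subtype.ext (MxM_annihilator F n r h1 h2 _ hz)
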